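/- For every subset S of Baire space, the set S \ [S_∞] is guessable. -/

import Mathlib

open Ordinal Filter Topology

/-- The first `n` values of `f` as a finite sequence. -/
def seg (f : ℕ → ℕ) (n : ℕ) : List ℕ := (List.range n).map f

/-- `[X]`: the set of infinite sequences all of whose initial segments lie in `X`. -/
def ext (X : Set (List ℕ)) : Set (ℕ → ℕ) := {f | ∀ n, seg f n ∈ X}

/-- `σ` is an initial segment of `f`. -/
def isInit (σ : List ℕ) (f : ℕ → ℕ) : Prop := seg f σ.length = σ

/-- One step of the derivative process relative to `S`. -/
def derivStep (S : Set (ℕ → ℕ)) (X : Set (List ℕ)) : Set (List ℕ) :=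
  {x ∈ X | ∃ f g : ℕ → ℕ, f ∈ ext X ∧ g ∈ ext X ∧ isInit x f ∧ isInit x g ∧ f ∈ S ∧ g ∉ S}

/-- The transfinite sequence `S_α`. -/
noncomputable def dSeq (S : Set (ℕ → ℕ)) (α : Ordinal.{0}) : Set (List ℕ) :=
  Ordinal.limitRecOn α Set.univ (fun _ X => derivStep S X)
    (fun o _ ih => ⋂ (β : Set.Iio o), ih β.1 β.2)

/-- `α(S)`: the least ordinal where the process stabilizes. -/
noncomputable def kernelOrd (S : Set (ℕ → ℕ)) : Ordinal.{0} :=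
  sInf {α | dSeq S α = dSeq S (α + 1)}

/-- `S_∞`, the kernel. -/
noncomputable def kernel (S : Set (ℕ → ℕ)) : Set (List ℕ) := dSeq S (kernelOrd S)

/-- `β(σ)`: the least ordinal `α` with `σ ∉ S_α`. -/
noncomputable def bOrd (S : Set (ℕ → ℕ)) (σ : List ℕ) : Ordinal.{0} :=
  sInf {α | σ ∉ dSeq S α}

open Classical in
/-- `S` is guessable. -/
def Guessable (S : Set (ℕ → ℕ)) : Prop :=
  ∃ G : List ℕ → ℕ, ∀ f : ℕ → ℕ,
    Tendsto (fun n => G (seg f n)) atTop (𝓝 (if f ∈ S then 1 else 0))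

/-- `Δ⁰₂`: both a countable union of closed sets and a countable intersection of open sets. -/
def IsDelta02 (S : Set (ℕ → ℕ)) : Prop :=
  (∃ F : ℕ → Set (ℕ → ℕ), (∀ n, IsClosed (F n)) ∧ S = ⋃ n, F n) ∧
  (∃ U : ℕ → Set (ℕ → ℕ), (∀ n, IsOpen (U n)) ∧ S = ⋂ n, U n)


lemma seg_length (f : ℕ → ℕ) (n : ℕ) : (seg f n).length = n := by
  simp [seg]

lemma seg_take (f : ℕ → ℕ) {m n : ℕ} (h : m ≤ n) : (seg f n).take m = seg f m := by
  simp [seg, ← List.map_take, List.take_range, Nat.min_eq_left h]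

lemma isInit_seg (f : ℕ → ℕ) (n : ℕ) : isInit (seg f n) f := by
  simp [isInit, seg_length]

lemma isInit_seg_iff {f : ℕ → ℕ} {n : ℕ} {g : ℕ → ℕ} :
    isInit (seg f n) g ↔ seg g n = seg f n := by
  simp [isInit, seg_length]

lemma seg_eq_of_isInit {f g : ℕ → ℕ} {m n : ℕ} (hmn : m ≤ n)
    (h : isInit (seg f n) g) : seg g m = seg f m := by
  rw [isInit_seg_iff] at h
  rw [← seg_take g hmn, h, seg_take f hmn]

lemma isInit_of_isInit {f g : ℕ → ℕ} {m n : ℕ} (hmn : m ≤ n)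
    (h : isInit (seg f n) g) : isInit (seg f m) g := by
  rw [isInit_seg_iff]; exact seg_eq_of_isInit hmn h

lemma derivStep_seg_mono {S : Set (ℕ → ℕ)} {X : Set (List ℕ)} {f : ℕ → ℕ} {m n : ℕ}
    (hmn : m ≤ n) (hn : seg f n ∈ derivStep S X) : seg f m ∈ derivStep S X := by
  obtain ⟨-, f', g', hf', hg', hif, hig, hfS, hgS⟩ := hn
  refine ⟨?_, f', g', hf', hg', isInit_of_isInit hmn hif, isInit_of_isInit hmn hig, hfS, hgS⟩
  have : seg f' m = seg f m := seg_eq_of_isInit hmn hif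
  rw [← this]; exact hf' m

lemma dSeq_zero (S : Set (ℕ → ℕ)) : dSeq S 0 = Set.univ := by
  rw [dSeq, Ordinal.limitRecOn_zero]

lemma dSeq_succ (S : Set (ℕ → ℕ)) (α : Ordinal.{0}) :
    dSeq S (α + 1) = derivStep S (dSeq S α) := by
  rw [dSeq, Ordinal.add_one_eq_succ, Ordinal.limitRecOn_succ]; rfl

lemma dSeq_limit (S : Set (ℕ → ℕ)) {o : Ordinal.{0}} (h : Order.IsSuccLimit o) :
    dSeq S o = ⋂ (β : Set.Iio o), dSeq S β.1 := by
  rw [dSeq, Ordinal.limitRecOn_limit _ _ _ _ h]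
  rfl

lemma dSeq_seg_mono (S : Set (ℕ → ℕ)) (α : Ordinal.{0}) :
    ∀ {f : ℕ → ℕ} {m n : ℕ}, m ≤ n → seg f n ∈ dSeq S α → seg f m ∈ dSeq S α := by
  induction α using Ordinal.limitRecOn with
  | zero => intro f m n _ _; rw [dSeq_zero]; trivial
  | add_one α _ =>
      intro f m n hmn hn
      rw [dSeq_succ] at *
      exact derivStep_seg_mono hmn hn
  | limit o ho ih =>
      intro f m n hmn hn
      rw [dSeq_limit S ho] at *
      exact Set.mem_iInter.2 fun β => ih β.1 β.2 hmn (Set.mem_iInter.1 hn β)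

lemma bOrd_not_mem {S : Set (ℕ → ℕ)} {σ : List ℕ} (h : ∃ α, σ ∉ dSeq S α) :
    σ ∉ dSeq S (bOrd S σ) :=
  csInf_mem h

lemma mem_dSeq_of_lt_bOrd {S : Set (ℕ → ℕ)} {σ : List ℕ} {γ : Ordinal.{0}}
    (h : γ < bOrd S σ) : σ ∈ dSeq S γ := by
  by_contra hc
  exact absurd (csInf_le' (s := {α | σ ∉ dSeq S α}) hc) (not_le.2 h)

/-- `bOrd` is a successor when it is attained. -/
lemma bOrd_is_succ {S : Set (ℕ → ℕ)} {σ : List ℕ} (h : ∃ α, σ ∉ dSeq S α) :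
    Order.succ (Ordinal.pred (bOrd S σ)) = bOrd S σ := by
  suffices hex : ∃ a, bOrd S σ = Order.succ a by
    obtain ⟨a, ha⟩ := hex; rw [ha, Ordinal.pred_succ]
  rcases Ordinal.zero_or_succ_or_isSuccLimit (bOrd S σ) with h0 | hs | hl
  · exfalso; apply bOrd_not_mem h; rw [h0, dSeq_zero]; trivial
  · obtain ⟨a, ha⟩ := hs; exact ⟨a, ha.symm⟩
  · exfalso
    have hns := bOrd_not_mem h
    rw [dSeq_limit S hl, Set.mem_iInter] at hns
    push_neg at hns
    obtain ⟨⟨β, hβ⟩, hb⟩ := hns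
    exact absurd (csInf_le' (s := {α | σ ∉ dSeq S α}) hb) (not_le.2 hβ)

lemma bOrd_anti {S : Set (ℕ → ℕ)} {f : ℕ → ℕ} {m n : ℕ} (hmn : m ≤ n)
    (h : ∃ α, seg f m ∉ dSeq S α) : bOrd S (seg f n) ≤ bOrd S (seg f m) := by
  apply csInf_le_csInf (OrderBot.bddBelow _) h
  intro α hα
  exact fun hn => hα (dSeq_seg_mono S α hmn hn)

theorem stmt10 (S : Set (ℕ → ℕ)) : Guessable (S \ ext (kernel S)) := by
  classical
  refine ⟨fun σ => if σ ∈ kernel S then 0 else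
    (if ∃ h : ℕ → ℕ, h ∈ ext (dSeq S (Ordinal.pred (bOrd S σ))) ∧ isInit σ h ∧ h ∈ S
      then 1 else 0), fun f => ?_⟩
  by_cases hk : f ∈ ext (kernel S)
  · -- all segments are in the kernel, guess is constantly 0, and f ∉ S \ ext (kernel S)
    have : (f ∈ S \ ext (kernel S)) = False := by simp [hk]
    rw [this]
    simp only [if_neg]
    have : ∀ n, (if seg f n ∈ kernel S then 0 else
        (if ∃ h : ℕ → ℕ, h ∈ ext (dSeq S (Ordinal.pred (bOrd S (seg f n)))) ∧
          isInit (seg f n) h ∧ h ∈ S then 1 else 0)) = 0 := fun n => if_pos (hk n)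
    simp only [this, if_false]
    exact tendsto_const_nhds
  · -- f eventually leaves the kernel
    obtain ⟨n₀, hn₀⟩ : ∃ n, seg f n ∉ kernel S := by
      by_contra hc; push_neg at hc; exact hk hc
    have hout : ∀ n, n₀ ≤ n → seg f n ∉ kernel S := fun n hn hmem =>
      hn₀ (dSeq_seg_mono S _ hn hmem)
    have hne : ∀ n, n₀ ≤ n → ∃ α, seg f n ∉ dSeq S α := fun n hn =>
      ⟨kernelOrd S, hout n hn⟩
    -- the sequence of ordinals stabilizes
    set b : ℕ → Ordinal.{0} := fun n => bOrd S (seg f (n₀ + n)) with hb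
    obtain ⟨δ, ⟨n₁, hδ⟩, hmin⟩ := wellFounded_lt.has_min (Set.range b) ⟨b 0, 0, rfl⟩
    set N := n₀ + n₁ with hN
    have hconst : ∀ n, N ≤ n → bOrd S (seg f n) = δ := by
      intro n hn
      have h1 : bOrd S (seg f n) ≤ b n₁ :=
        bOrd_anti hn (hne N (Nat.le_add_right _ _))
      rw [hδ] at h1
      rcases lt_or_eq_of_le h1 with h2 | h2
      · exact absurd h2 (by
          have : bOrd S (seg f n) ∈ Set.range b := ⟨n - n₀, by
            have hn' : n₀ + n₁ ≤ n := hn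
            have h3 : n₀ + (n - n₀) = n := by omega
            rw [hb]; dsimp only; rw [h3]⟩
          exact hmin _ this)
      · exact h2
    set γ := Ordinal.pred δ with hγ
    have hsucc : Order.succ γ = δ := by
      rw [hγ, ← hδ, hb]
      exact bOrd_is_succ (hne N (Nat.le_add_right _ _))
    have hγlt : γ < δ := by rw [← hsucc]; exact Order.lt_succ _
    -- f ∈ ext (dSeq S γ)
    have hfext : f ∈ ext (dSeq S γ) := by
      intro n
      rcases le_or_gt N n with hn | hn
      · exact mem_dSeq_of_lt_bOrd (by rw [hconst n hn]; exact hγlt)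
      · exact dSeq_seg_mono S γ (le_of_lt hn)
          (mem_dSeq_of_lt_bOrd (by rw [hconst N le_rfl]; exact hγlt))
    have hnotstep : ∀ n, N ≤ n → seg f n ∉ derivStep S (dSeq S γ) := by
      intro n hn
      rw [← dSeq_succ, Ordinal.add_one_eq_succ, hsucc, ← hconst n hn]
      exact bOrd_not_mem (hne n (le_trans (by omega : n₀ ≤ N) hn))
    have hpred : ∀ n, N ≤ n → Ordinal.pred (bOrd S (seg f n)) = γ := by
      intro n hn; rw [hconst n hn]
    by_cases hfS : f ∈ S
    · -- guess is eventually 1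
      have hmem : (f ∈ S \ ext (kernel S)) = True := by simp [hfS, hk]
      rw [hmem, if_pos trivial]
      apply tendsto_const_nhds.congr' (eventually_atTop.2 ⟨N, fun n hn => ?_⟩)
      dsimp only
      rw [if_neg (hout n (le_trans (by omega : n₀ ≤ N) hn)),
        if_pos ⟨f, by rw [hpred n hn]; exact hfext, isInit_seg f n, hfS⟩]
    · -- guess is eventually 0
      have hmem : (f ∈ S \ ext (kernel S)) = False := by simp [hfS]
      rw [hmem, if_neg (by exact id)]
      apply tendsto_const_nhds.congr' (eventually_atTop.2 ⟨N, fun n hn => ?_⟩)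
      dsimp only
      rw [if_neg (hout n (le_trans (by omega : n₀ ≤ N) hn)), if_neg]
      rintro ⟨h, hhext, hhinit, hhS⟩
      rw [hpred n hn] at hhext
      exact hnotstep n hn ⟨hfext n, h, f, hhext, hfext, hhinit, isInit_seg f n, hhS, hfS⟩
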